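/- Let M be a separable metrizable space. Then M is locally compact if and only if there is NO map φ : 𝒦(M) → (ℕ→ℕ) such that for every family S ⊆ 𝒦(M) that is cofinal in (𝒦(M),⊆) (every compact subset of M is contained in a member of S), the image {φ(K) : K ∈ S} is cofinal in (ℕ→ℕ) with the pointwise order. (That is, 𝒦(M) does not Tukey quotient to (ω^ω,𝒦(ω^ω)) exactly when M is locally compact.) -/

import Mathlib

open Filter Set Metric Topology TopologicalSpace

/-- A separable metrizable space `M` is locally compact iff `𝒦(M)` does not Tukey quotient
to `(ω^ω, 𝒦(ω^ω))`, i.e. to `(ℕ → ℕ)` with the pointwise order. -/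
theorem locallyCompact_iff_compacts_not_tukey_quotient_to_baire
    (M : Type*) [TopologicalSpace M]
    [TopologicalSpace.MetrizableSpace M] [TopologicalSpace.SeparableSpace M] :
    LocallyCompactSpace M ↔
    ¬ ∃ φ : {K : Set M // IsCompact K} → (ℕ → ℕ),
        ∀ S : Set {K : Set M // IsCompact K},
          (∀ K : {K : Set M // IsCompact K}, ∃ C ∈ S, K.1 ⊆ C.1) →
          ∀ g : ℕ → ℕ, ∃ C ∈ S, g ≤ φ C := by
  letI : MetricSpace M := TopologicalSpace.metrizableSpaceMetric M
  haveI : SecondCountableTopology M := UniformSpace.secondCountable_of_separable M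
  constructor
  · rintro hLC ⟨φ, hφ⟩
    obtain ⟨E⟩ : Nonempty (CompactExhaustion M) := inferInstance
    set S : Set {K : Set M // IsCompact K} :=
      Set.range (fun n => (⟨E n, E.isCompact n⟩ : {K : Set M // IsCompact K})) with hSdef
    have hcof : ∀ K : {K : Set M // IsCompact K}, ∃ C ∈ S, K.1 ⊆ C.1 := by
      intro K
      obtain ⟨n, hn⟩ := E.exists_superset_of_isCompact K.2
      exact ⟨⟨E n, E.isCompact n⟩, ⟨n, rfl⟩, hn⟩
    obtain ⟨C, hCS, hle⟩ := hφ S hcof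
      (fun n => φ (⟨E n, E.isCompact n⟩ : {K : Set M // IsCompact K}) n + 1)
    obtain ⟨m, rfl⟩ := hCS
    have := hle m
    simp only at this
    omega
  · intro h
    by_contra hLC
    apply h; clear h
    -- there is a point with no compact neighborhood
    have hx : ∃ x : M, ∀ K : Set M, IsCompact K → K ∉ 𝓝 x := by
      by_contra hw
      push_neg at hw
      exact hLC (@WeaklyLocallyCompactSpace.locallyCompactSpace M _ _
        ⟨fun x => by obtain ⟨K, h1, h2⟩ := hw x; exact ⟨K, h1, h2⟩⟩)
    obtain ⟨x, hx⟩ := hx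
    have hnc : ∀ n : ℕ, ¬ IsCompact (closure (ball x (1 / ((n : ℝ) + 1)))) := by
      intro n hc
      exact hx _ hc (mem_of_superset (ball_mem_nhds x (by positivity)) subset_closure)
    have hseq : ∀ n : ℕ, ∃ y : ℕ → M,
        (∀ k, y k ∈ closure (ball x (1 / ((n : ℝ) + 1)))) ∧
        ∀ a ∈ closure (ball x (1 / ((n : ℝ) + 1))), ∀ ψ : ℕ → ℕ, StrictMono ψ →
          ¬ Tendsto (y ∘ ψ) atTop (𝓝 a) := by
      intro n
      have h2 : ¬ IsSeqCompact (closure (ball x (1 / ((n : ℝ) + 1)))) :=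
        fun hs => hnc n hs.isCompact
      rw [IsSeqCompact] at h2
      push_neg at h2
      obtain ⟨y, hy1, hy2⟩ := h2
      exact ⟨y, hy1, hy2⟩
    choose y hy1 hy2 using hseq
    -- each compact set meets each of the chosen sequences only finitely often
    have hfin : ∀ K : Set M, IsCompact K → ∀ n : ℕ, {k : ℕ | y n k ∈ K}.Finite := by
      intro K hK n
      by_contra hinf
      rw [← Set.not_infinite, not_not] at hinf
      have hmem : ∀ j, (y n ∘ Nat.nth (fun k => y n k ∈ K)) j ∈ K := fun j =>
        Nat.nth_mem_of_infinite hinf j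
      obtain ⟨a, haK, ψ, hψ, hten⟩ := hK.isSeqCompact hmem
      have haC : a ∈ closure (ball x (1 / ((n : ℝ) + 1))) :=
        isClosed_closure.mem_of_tendsto hten (Eventually.of_forall fun j => hy1 n _)
      exact hy2 n a haC ((Nat.nth (fun k => y n k ∈ K)) ∘ ψ)
        ((Nat.nth_strictMono hinf).comp hψ) hten
    refine ⟨fun K => fun n => sSup {k : ℕ | y n k ∈ K.1}, ?_⟩
    intro S hS g
    -- build a compact set forcing φ to be large
    set w : ℕ → M := fun m =>
      if (Nat.unpair m).2 ≤ g (Nat.unpair m).1 then y (Nat.unpair m).1 (Nat.unpair m).2 else x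
      with hwdef
    have hten : Tendsto w cofinite (𝓝 x) := by
      rw [Metric.tendsto_nhds]
      intro ε hε
      rw [Filter.eventually_cofinite]
      obtain ⟨N, hN⟩ := exists_nat_gt (1 / ε)
      have hsub : {m : ℕ | ¬ dist (w m) x < ε} ⊆
          (fun p : ℕ × ℕ => Nat.pair p.1 p.2) ''
            (Set.Iio N ×ˢ Set.Iic ((Finset.range N).sup g)) := by
        intro m hm
        simp only [Set.mem_setOf_eq, not_lt] at hm
        set n := (Nat.unpair m).1
        set k := (Nat.unpair m).2
        have hk : k ≤ g n := by
          by_contra hk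
          have : w m = x := by simp only [hwdef]; exact if_neg hk
          rw [this, dist_self] at hm
          exact absurd hm (not_le.2 hε)
        have hwm : w m = y n k := by simp only [hwdef]; exact if_pos hk
        have hd : dist (y n k) x ≤ 1 / ((n : ℝ) + 1) := by
          have := closure_ball_subset_closedBall (hy1 n k)
          rwa [mem_closedBall] at this
        rw [hwm] at hm
        have h1 : (n : ℝ) + 1 ≤ 1 / ε := by
          rw [le_div_iff₀ hε]
          have h0 : (0 : ℝ) < (n : ℝ) + 1 := by positivity
          have := hm.trans hd
          rw [le_div_iff₀ h0] at this
          linarith [this]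
        have hnN : n < N := by
          have : (n : ℝ) + 1 < N := lt_of_le_of_lt h1 hN
          exact_mod_cast lt_of_lt_of_le (by linarith : (n : ℝ) < N) le_rfl
        refine ⟨(n, k), ⟨hnN, ?_⟩, ?_⟩
        · exact hk.trans (Finset.le_sup (Finset.mem_range.2 hnN))
        · exact Nat.pair_unpair m
      exact (((Set.finite_Iio N).prod (Set.finite_Iic _)).image _).subset hsub
    have hcg : IsCompact (insert x (Set.range w)) := hten.isCompact_insert_range_of_cofinite
    obtain ⟨C, hCS, hsubC⟩ := hS ⟨insert x (Set.range w), hcg⟩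
    refine ⟨C, hCS, fun n => ?_⟩
    have hyg : y n (g n) ∈ C.1 := by
      apply hsubC
      refine Set.mem_insert_iff.2 (Or.inr ⟨Nat.pair n (g n), ?_⟩)
      simp [hwdef, Nat.unpair_pair]
    exact le_csSup ((hfin C.1 C.2 n).bddAbove) hyg
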